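/- Let W be a real symmetric m×m matrix, u a unit vector, θ > 0, θ ≠ 1, P = I + (θ-1) u uᵀ. Suppose ũ is a unit eigenvector of W P with eigenvalue λ̂, where λ̂ is not an eigenvalue of W and ⟨ũ, u⟩ ≠ 0. Then for every vector v, ⟨ũ, v⟩² = (Σ_i (λ_i/(λ̂-λ_i)) ⟨u_i, v⟩⟨u_i, u⟩)² / (Σ_i (λ_i²/(λ̂-λ_i)²) ⟨u_i, u⟩²), where (λ_i, u_i) is a spectral decomposition of W. -/

import Mathlib

open Matrix

lemma vecMulVec_mulVec' {m : ℕ} (a b x : Fin m → ℝ) :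
    vecMulVec a b *ᵥ x = (b ⬝ᵥ x) • a := by
  ext i
  simp [mulVec, dotProduct, vecMulVec_apply, Finset.mul_sum, Pi.smul_apply, smul_eq_mul,
    mul_comm, mul_left_comm, mul_assoc]

/-- Eigenvector coordinate formula for a unit eigenvector `ũ` of `W P`. -/
theorem stmt2 {m : ℕ} (W : Matrix (Fin m) (Fin m) ℝ) (lam : Fin m → ℝ)
    (uvec : Fin m → Fin m → ℝ)
    (horth : ∀ i j, uvec i ⬝ᵥ uvec j = if i = j then (1 : ℝ) else 0)
    (hW : W = ∑ i, lam i • vecMulVec (uvec i) (uvec i))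
    (u : Fin m → ℝ) (hu : u ⬝ᵥ u = 1)
    (θ : ℝ) (hθ : 0 < θ) (hθ1 : θ ≠ 1)
    (util : Fin m → ℝ) (hunit : util ⬝ᵥ util = 1) (lamhat : ℝ)
    (heig : (W * ((1 : Matrix (Fin m) (Fin m) ℝ) + (θ - 1) • vecMulVec u u)) *ᵥ util =
      lamhat • util)
    (hnot : ¬ ∃ v : Fin m → ℝ, v ≠ 0 ∧ W *ᵥ v = lamhat • v)
    (hover : util ⬝ᵥ u ≠ 0) :
    ∀ v : Fin m → ℝ,
      (util ⬝ᵥ v) ^ 2 =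
        (∑ i, lam i / (lamhat - lam i) * (uvec i ⬝ᵥ v) * (uvec i ⬝ᵥ u)) ^ 2 /
          (∑ i, lam i ^ 2 / (lamhat - lam i) ^ 2 * (uvec i ⬝ᵥ u) ^ 2) := by
  intro v
  set U : Matrix (Fin m) (Fin m) ℝ := Matrix.of uvec with hUdef
  have hUU : U * Uᵀ = 1 := by
    ext i j
    simpa [Matrix.mul_apply, Matrix.one_apply, dotProduct, U] using horth i j
  have hUtU : Uᵀ * U = 1 := mul_eq_one_comm.mp hUU
  have parseval : ∀ x y : Fin m → ℝ, ∑ i, (uvec i ⬝ᵥ x) * (uvec i ⬝ᵥ y) = x ⬝ᵥ y := by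
    intro x y
    have h1 : (U *ᵥ x) ⬝ᵥ (U *ᵥ y) = x ⬝ᵥ y := by
      rw [dotProduct_mulVec, ← vecMul_transpose, vecMul_vecMul, hUtU, vecMul_one]
    simpa [dotProduct, mulVec, U] using h1
  -- action of W on vectors
  have hWmul : ∀ y, W *ᵥ y = ∑ i, (lam i * (uvec i ⬝ᵥ y)) • uvec i := by
    intro y
    rw [hW]; ext k
    simp only [mulVec, dotProduct, Matrix.sum_apply, Matrix.smul_apply, vecMulVec_apply,
      smul_eq_mul, Finset.sum_mul, Finset.sum_apply, Pi.smul_apply]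
    rw [Finset.sum_comm]
    refine Finset.sum_congr rfl fun i _ => ?_
    simp only [Finset.mul_sum, Finset.sum_mul]
    refine Finset.sum_congr rfl fun l _ => by ring
  have hWvec : ∀ j, W *ᵥ uvec j = lam j • uvec j := by
    intro j
    rw [hWmul]
    rw [Finset.sum_eq_single j]
    · rw [horth j j]; simp
    · intro i _ hij; rw [horth i j, if_neg hij]; simp
    · simp
  have hWdot : ∀ j y, uvec j ⬝ᵥ (W *ᵥ y) = lam j * (uvec j ⬝ᵥ y) := by
    intro j y
    have hsym : Wᵀ = W := by
      rw [hW]; ext i k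
      simp [Matrix.transpose_apply, Matrix.sum_apply, vecMulVec_apply, mul_comm]
    rw [dotProduct_mulVec, ← mulVec_transpose, hsym, hWvec, smul_dotProduct, smul_eq_mul]
  -- lamhat avoids the spectrum
  have hne : ∀ j, lamhat - lam j ≠ 0 := by
    intro j h
    apply hnot
    refine ⟨uvec j, ?_, ?_⟩
    · intro h0
      have := horth j j
      rw [h0] at this
      simp [dotProduct] at this
    · rw [hWvec j, show lam j = lamhat by linarith]
  set c : ℝ := (θ - 1) * (u ⬝ᵥ util) with hc_def
  have hc : c ≠ 0 := by
    apply mul_ne_zero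
    · intro h; exact hθ1 (by linarith)
    · rw [dotProduct_comm]; exact hover
  -- scalar eigen equation
  have heig' : ∀ j, lam j * (uvec j ⬝ᵥ util) + lam j * c * (uvec j ⬝ᵥ u) =
      lamhat * (uvec j ⬝ᵥ util) := by
    intro j
    have h := congrArg (fun w => uvec j ⬝ᵥ w) heig
    rw [← mulVec_mulVec, add_mulVec, one_mulVec, smul_mulVec, vecMulVec_mulVec',
      smul_smul, mulVec_add, mulVec_smul, dotProduct_add, dotProduct_smul, hWdot, hWdot,
      dotProduct_smul] at h
    simp only [smul_eq_mul] at h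
    rw [← h, ← hc_def]; ring
  have ha : ∀ j, uvec j ⬝ᵥ util = c * (lam j * (uvec j ⬝ᵥ u)) / (lamhat - lam j) := by
    intro j
    have h := heig' j
    field_simp [hne j]
    nlinarith [h]
  set S : ℝ := ∑ i, lam i / (lamhat - lam i) * (uvec i ⬝ᵥ v) * (uvec i ⬝ᵥ u) with hS
  set D : ℝ := ∑ i, lam i ^ 2 / (lamhat - lam i) ^ 2 * (uvec i ⬝ᵥ u) ^ 2 with hD_def
  have hSv : util ⬝ᵥ v = c * S := by
    rw [← parseval util v, hS, Finset.mul_sum]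
    refine Finset.sum_congr rfl fun i _ => ?_
    rw [ha i]
    field_simp
  have hD : 1 = c ^ 2 * D := by
    rw [← hunit, ← parseval util util, hD_def, Finset.mul_sum]
    refine Finset.sum_congr rfl fun i _ => ?_
    rw [ha i]
    field_simp
  have hDne : D ≠ 0 := by
    intro h; rw [h, mul_zero] at hD; exact one_ne_zero hD
  rw [hSv, eq_div_iff hDne]
  linear_combination (-S ^ 2) * hD
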